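/- Let a, b, c ∈ ℤ be such that exactly one of b and c is divisible by 5. Then there is no homogeneous polynomial f ∈ ℤ[x, y] (of any degree) satisfying f(1,4) = a, f(3,5) = b, and f(4,5) = c. -/

import Mathlib

open MvPolynomial

lemma zmod5_three_ne_zero : (3 : ZMod 5) ≠ 0 := by decide
lemma zmod5_four_ne_zero : (4 : ZMod 5) ≠ 0 := by decide

lemma hom_eval_smul {R : Type*} [CommSemiring R] {f : MvPolynomial (Fin 2) R} {d : ℕ}
    (hf : f.IsHomogeneous d) (r : R) (x : Fin 2 → R) :
    MvPolynomial.eval (r • x) f = r ^ d * MvPolynomial.eval x f := by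
  rw [eval_eq', eval_eq', Finset.mul_sum]
  apply Finset.sum_congr rfl
  intro m hm
  have hdeg : ∑ i, m i = d := by
    have := hf (MvPolynomial.mem_support_iff.mp hm)
    simpa [Finsupp.weight_apply, Finsupp.sum_fintype] using this
  calc f.coeff m * ∏ i, (r • x) i ^ m i
      = f.coeff m * ((∏ i, r ^ m i) * ∏ i, x i ^ m i) := by
        rw [← Finset.prod_mul_distrib]; simp [mul_pow]
    _ = r ^ d * (f.coeff m * ∏ i, x i ^ m i) := by
        rw [Finset.prod_pow_eq_pow_sum, hdeg]; ring

/-- If exactly one of `b`, `c` is divisible by 5, then no homogeneous polynomial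
`f ∈ ℤ[x,y]` satisfies `f(1,4) = a`, `f(3,5) = b`, `f(4,5) = c`. -/
theorem no_homogeneous_interpolation (a b c : ℤ)
    (h : ((5 : ℤ) ∣ b ∧ ¬ (5 : ℤ) ∣ c) ∨ (¬ (5 : ℤ) ∣ b ∧ (5 : ℤ) ∣ c)) :
    ¬ ∃ (f : MvPolynomial (Fin 2) ℤ) (d : ℕ), f.IsHomogeneous d ∧
      MvPolynomial.eval ![1, 4] f = a ∧
      MvPolynomial.eval ![3, 5] f = b ∧
      MvPolynomial.eval ![4, 5] f = c := by
  rintro ⟨f, d, hf, -, hb, hc⟩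
  set φ := Int.castRingHom (ZMod 5) with hφ
  set g := MvPolynomial.map φ f with hg
  have hgh : g.IsHomogeneous d := hf.map φ
  have key : ∀ x : Fin 2 → ℤ, MvPolynomial.eval (fun i => φ (x i)) g = φ (MvPolynomial.eval x f) := by
    intro x
    rw [hg, MvPolynomial.eval_map]
    simpa [Function.comp_def] using (MvPolynomial.eval₂_comp_left φ (RingHom.id ℤ) x f).symm
  have hb5 : MvPolynomial.eval ![3, 0] g = (b : ZMod 5) := by
    have hx : (fun i => φ (![3, 5] i)) = ![3, 0] := by
      funext i; fin_cases i <;> simp [φ] <;> decide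
    have := key ![3, 5]
    rw [hb, hx] at this
    exact this
  have hc5 : MvPolynomial.eval ![4, 0] g = (c : ZMod 5) := by
    have hx : (fun i => φ (![4, 5] i)) = ![4, 0] := by
      funext i; fin_cases i <;> simp [φ] <;> decide
    have := key ![4, 5]
    rw [hc, hx] at this
    exact this
  have e3 : (![3, 0] : Fin 2 → ZMod 5) = (3 : ZMod 5) • ![1, 0] := by
    funext i; fin_cases i <;> simp
  have e4 : (![4, 0] : Fin 2 → ZMod 5) = (4 : ZMod 5) • ![1, 0] := by
    funext i; fin_cases i <;> simp
  rw [e3, hom_eval_smul hgh] at hb5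
  rw [e4, hom_eval_smul hgh] at hc5
  haveI : Fact (Nat.Prime 5) := ⟨by norm_num⟩
  set t := MvPolynomial.eval ![1, 0] g
  have h3 : (3 : ZMod 5) ^ d ≠ 0 := pow_ne_zero _ zmod5_three_ne_zero
  have h4 : (4 : ZMod 5) ^ d ≠ 0 := pow_ne_zero _ zmod5_four_ne_zero
  have hbz : (5 : ℤ) ∣ b ↔ t = 0 := by
    rw [show (5:ℤ) = ((5:ℕ):ℤ) by norm_num, ← ZMod.intCast_zmod_eq_zero_iff_dvd, ← hb5, mul_eq_zero]
    simp [h3]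
  have hcz : (5 : ℤ) ∣ c ↔ t = 0 := by
    rw [show (5:ℤ) = ((5:ℕ):ℤ) by norm_num, ← ZMod.intCast_zmod_eq_zero_iff_dvd, ← hc5, mul_eq_zero]
    simp [h4]
  rcases h with ⟨h1, h2⟩ | ⟨h1, h2⟩
  · exact h2 (hcz.mpr (hbz.mp h1))
  · exact h1 (hbz.mpr (hcz.mp h2))
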